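/- Let g ∈ S_n be a permutation with supp(g) = k, where supp(g) = n − (number of fixed points of g). Then the conjugacy class of g in S_n satisfies binom(n, k) ≤ |g^{S_n}| ≤ n^k. -/

import Mathlib

open Finset

private lemma conj_eq_of_eqOn {n : ℕ} (g σ τ : Equiv.Perm (Fin n))
    (h : ∀ x ∈ g.support, σ x = τ x) : σ * g * σ⁻¹ = τ * g * τ⁻¹ := by
  ext x
  simp only [Equiv.Perm.mul_apply]
  by_cases hy : σ⁻¹ x ∈ g.support
  · have h1 : g (σ⁻¹ x) ∈ g.support := Equiv.Perm.apply_mem_support.mpr hy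
    have h2 : τ⁻¹ x = σ⁻¹ x := by
      rw [Equiv.Perm.inv_def, Equiv.symm_apply_eq, ← h _ hy]
      simp
    rw [h2, ← h _ h1]
  · have h1 : g (σ⁻¹ x) = σ⁻¹ x := Equiv.Perm.notMem_support.mp hy
    have h2 : τ⁻¹ x ∉ g.support := by
      intro hz
      have : σ (τ⁻¹ x) = x := by rw [h _ hz]; simp
      have : τ⁻¹ x = σ⁻¹ x := σ.injective (by rw [this]; simp)
      rw [this] at hz; exact hy hz
    have h3 : g (τ⁻¹ x) = τ⁻¹ x := Equiv.Perm.notMem_support.mp h2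
    rw [h1, h3]; simp

/-- if `g ∈ S_n` has support of size `k` (i.e. `g` moves exactly `k`
points, fixing the other `n - k`), then `binom(n,k) ≤ |g^{S_n}| ≤ n^k`. -/
theorem stmt_14 {n k : ℕ} (g : Equiv.Perm (Fin n)) (hk : g.support.card = k) :
    n.choose k ≤ Nat.card (ConjClasses.mk g).carrier ∧
      Nat.card (ConjClasses.mk g).carrier ≤ n ^ k := by
  classical
  constructor
  · -- lower bound: injection from k-subsets into the carrier
    have key : ∀ S : Finset (Fin n), S.card = k →
        ∃ h : Equiv.Perm (Fin n), h ∈ (ConjClasses.mk g).carrier ∧ h.support = S := by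
      intro S hS
      have hc : g.supportᶜ.card = Sᶜ.card := by
        simp [Finset.card_compl, hk, hS]
      let e1 : {x // x ∈ g.support} ≃ {x // x ∈ S} := Finset.equivOfCardEq (hk.trans hS.symm)
      let e2 : {x // x ∈ g.supportᶜ} ≃ {x // x ∈ Sᶜ} := Finset.equivOfCardEq hc
      let e2' : {x // ¬ x ∈ g.support} ≃ {x // ¬ x ∈ S} :=
        (Equiv.subtypeEquivRight (fun x => by simp)).trans
          (e2.trans (Equiv.subtypeEquivRight (fun x => by simp)))
      let σ : Equiv.Perm (Fin n) :=
        ((Equiv.sumCompl (· ∈ g.support)).symm.trans (e1.sumCongr e2')).trans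
          (Equiv.sumCompl (· ∈ S))
      have hσ : ∀ x ∈ g.support, σ x ∈ S := by
        intro x hx
        simp only [σ, Equiv.trans_apply]
        have hsum : (Equiv.sumCompl (· ∈ g.support)).symm x = Sum.inl ⟨x, hx⟩ := by
          rw [Equiv.symm_apply_eq]; simp
        rw [hsum]
        simp
      refine ⟨σ * g * σ⁻¹, ?_, ?_⟩
      · rw [ConjClasses.mem_carrier_iff_mk_eq, ConjClasses.mk_eq_mk_iff_isConj]
        exact (isConj_iff.mpr ⟨σ, rfl⟩).symm
      · rw [Equiv.Perm.support_conj]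
        apply Finset.eq_of_subset_of_card_le
        · intro x hx
          simp only [Finset.mem_map, Equiv.toEmbedding_apply] at hx
          obtain ⟨y, hy, rfl⟩ := hx
          exact hσ y hy
        · simp [hk, hS]
    have hfin : Finite (ConjClasses.mk g).carrier := Subtype.finite
    choose F hF1 hF2 using key
    have hinj : Function.Injective
        (fun S : {S : Finset (Fin n) // S ∈ Finset.powersetCard k Finset.univ} =>
          (⟨F S.1 (Finset.mem_powersetCard_univ.mp S.2), hF1 _ _⟩ :
            (ConjClasses.mk g).carrier)) := by
      intro S T hST
      have : F S.1 _ = F T.1 _ := congrArg Subtype.val hST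
      have := congrArg Equiv.Perm.support this
      rw [hF2, hF2] at this
      exact Subtype.ext this
    have := Nat.card_le_card_of_injective _ hinj
    rwa [Nat.card_eq_finsetCard, Finset.card_powersetCard, Finset.card_univ,
      Fintype.card_fin] at this
  · -- upper bound: injection from carrier into (support → Fin n)
    have hfin : Finite (ConjClasses.mk g).carrier := Subtype.finite
    have key : ∀ h : (ConjClasses.mk g).carrier, ∃ σ : Equiv.Perm (Fin n),
        σ * g * σ⁻¹ = (h : Equiv.Perm (Fin n)) := by
      intro h
      have := h.2
      rw [ConjClasses.mem_carrier_iff_mk_eq, ConjClasses.mk_eq_mk_iff_isConj] at this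
      exact isConj_iff.mp this.symm
    choose F hF using key
    have hinj : Function.Injective
        (fun h : (ConjClasses.mk g).carrier =>
          (fun x : {x // x ∈ g.support} => F h x : {x // x ∈ g.support} → Fin n)) := by
      intro h1 h2 h12
      have : F h1 * g * (F h1)⁻¹ = F h2 * g * (F h2)⁻¹ := by
        apply conj_eq_of_eqOn
        intro x hx
        exact congrFun h12 ⟨x, hx⟩
      rw [hF, hF] at this
      exact Subtype.ext this
    have := Nat.card_le_card_of_injective _ hinj
    have hfn : Nat.card (Fin n) = n := by simp
    rwa [Nat.card_fun, Nat.card_eq_finsetCard, hk, hfn] at this
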